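/- arXiv:0710.3647 — 2 statements merged into one kernel-verified Lean document; each statement's English description precedes it below -/
import Mathlib

section
/- Let P₁ be the gamma distribution with shape α₁ > 0 and scale β₁ > 0, and P₂ the gamma distribution with shape α₂ > 0 and scale β₂ > 0, and suppose the means are equal: α₁β₁ = α₂β₂. Then D(P₁‖P₂) = ∫₀^{α₂−α₁} (ψ′(α₁ + t) − 1/(α₁ + t))·(α₂ − α₁ − t) dt, where ψ′ = (log Γ)″ is the trigamma function and the integral is the oriented interval integral. -/
open MeasureTheory Real Set intervalIntegral

/-- The gamma distribution with shape `α` and scale `β`: the measure on `ℝ` with density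
`x ^ (α - 1) * exp (-x / β) / (Γ α * β ^ α)` on `(0, ∞)`. -/
noncomputable def gammaDist (α β : ℝ) : Measure ℝ :=
  volume.withDensity fun x =>
    ENNReal.ofReal (if x ∈ Set.Ioi (0 : ℝ) then
      x ^ (α - 1) * Real.exp (-x / β) / (Real.Gamma α * β ^ α) else 0)

/-- Kullback–Leibler divergence `D(P‖Q) = ∫ log (dP/dQ) dP`. -/
noncomputable def klDiv (P Q : Measure ℝ) : ℝ :=
  ∫ x, Real.log (P.rnDeriv Q x).toReal ∂P

/-- The trigamma function `ψ′ = (log Γ)″`. -/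
noncomputable def trigamma (x : ℝ) : ℝ :=
  deriv (deriv (fun y => Real.log (Real.Gamma y))) x

open Filter
open scoped ENNReal NNReal

noncomputable def digamma (x : ℝ) : ℝ := deriv (fun y => Real.log (Real.Gamma y)) x

lemma contDiffAt_Gamma_my {a : ℝ} (ha : 0 < a) : ContDiffAt ℝ ⊤ Real.Gamma a := by
  have hU : IsOpen {s : ℂ | 0 < s.re} := isOpen_lt continuous_const Complex.continuous_re
  have hd : DifferentiableOn ℂ Complex.Gamma {s : ℂ | 0 < s.re} := fun s hs =>
    (Complex.differentiableAt_Gamma s (fun m => by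
      intro h
      rw [h] at hs
      simp only [mem_setOf_eq, Complex.neg_re, Complex.natCast_re] at hs
      have : (0:ℝ) ≤ m := Nat.cast_nonneg m
      linarith)).differentiableWithinAt
  have han : AnalyticAt ℂ Complex.Gamma (a : ℂ) :=
    (hd.analyticOnNhd hU) _ (by simpa using ha)
  have hC : ContDiffAt ℂ ⊤ Complex.Gamma (a : ℂ) := han.contDiffAt
  have h1 : ContDiffAt ℝ ⊤ (fun x : ℝ => (Complex.Gamma (x : ℂ)).re) a := by
    exact Complex.reCLM.contDiff.contDiffAt.comp _
      ((hC.restrict_scalars ℝ).comp _ Complex.ofRealCLM.contDiff.contDiffAt)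
  refine h1.congr_of_eventuallyEq (Filter.Eventually.of_forall fun x => ?_)
  simp [Complex.Gamma_ofReal]

lemma contDiffAt_logGamma {a : ℝ} (ha : 0 < a) :
    ContDiffAt ℝ ⊤ (fun y => Real.log (Real.Gamma y)) a :=
  (Real.contDiffAt_log.mpr (Real.Gamma_pos_of_pos ha).ne').comp _ (contDiffAt_Gamma_my ha)

lemma contDiffOn_logGamma : ContDiffOn ℝ ⊤ (fun y => Real.log (Real.Gamma y)) (Ioi 0) :=
  fun x hx => (contDiffAt_logGamma hx).contDiffWithinAt

lemma hasDerivAt_digamma {a : ℝ} (ha : 0 < a) : HasDerivAt digamma (trigamma a) a := by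
  have h : ContDiffOn ℝ ⊤ (deriv (fun y => Real.log (Real.Gamma y))) (Ioi 0) :=
    contDiffOn_logGamma.deriv_of_isOpen isOpen_Ioi (le_refl _)
  have := (h.contDiffAt (isOpen_Ioi.mem_nhds ha)).differentiableAt (by norm_num)
  exact this.hasDerivAt

lemma continuousOn_trigamma : ContinuousOn trigamma (Ioi 0) := by
  have h : ContDiffOn ℝ ⊤ (deriv (fun y => Real.log (Real.Gamma y))) (Ioi 0) :=
    contDiffOn_logGamma.deriv_of_isOpen isOpen_Ioi (le_refl _)
  have h2 : ContDiffOn ℝ ⊤ (deriv (deriv (fun y => Real.log (Real.Gamma y)))) (Ioi 0) :=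
    h.deriv_of_isOpen isOpen_Ioi (le_refl _)
  exact h2.continuousOn

lemma hasDerivAt_Gamma_my {a : ℝ} (ha : 0 < a) :
    HasDerivAt Real.Gamma (∫ t in Ioi (0:ℝ), t ^ (a - 1) * (Real.log t * Real.exp (-t))) a := by
  have hc : HasDerivAt Complex.Gamma
      (∫ t : ℝ in Ioi 0, (t : ℂ) ^ ((a : ℂ) - 1) * (Real.log t * Real.exp (-t))) (a : ℂ) := by
    refine HasDerivAt.congr_of_eventuallyEq (Complex.hasDerivAt_GammaIntegral (by simpa using ha)) ?_
    have hU : IsOpen {s : ℂ | 0 < s.re} := isOpen_lt continuous_const Complex.continuous_re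
    filter_upwards [hU.mem_nhds (by simpa using ha)] with s hs
    exact Complex.Gamma_eq_integral hs
  have heq : (∫ t : ℝ in Ioi 0, (t : ℂ) ^ ((a : ℂ) - 1) * (Real.log t * Real.exp (-t))) =
      ((∫ t in Ioi (0:ℝ), t ^ (a - 1) * (Real.log t * Real.exp (-t)) : ℝ) : ℂ) := by
    refine (setIntegral_congr_fun measurableSet_Ioi fun t ht => ?_).trans integral_ofReal
    rw [show ((a:ℂ) - 1) = ((a - 1 : ℝ) : ℂ) by push_cast; ring,
      ← Complex.ofReal_cpow (le_of_lt ht)]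
    norm_cast
  rw [heq] at hc
  have h2 : HasDerivAt (fun x : ℝ => (Complex.Gamma (x:ℂ)).re)
      (∫ t in Ioi (0:ℝ), t ^ (a - 1) * (Real.log t * Real.exp (-t))) a := by
    simpa using hc.real_of_complex
  exact h2.congr_of_eventuallyEq (Filter.Eventually.of_forall fun x => by
    simp [Complex.Gamma_ofReal])

lemma hasDerivAt_g {y : ℝ} (hy : 0 < y) :
    HasDerivAt (fun y => Real.log (Real.Gamma y) - y * Real.log y + y)
      (digamma y - Real.log y) y := by
  have hL : HasDerivAt (fun y => Real.log (Real.Gamma y)) (digamma y) y :=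
    (((contDiffAt_logGamma hy).differentiableAt (by simp))).hasDerivAt
  have h2 : HasDerivAt (fun y : ℝ => y * Real.log y) (Real.log y + 1) y := by
    have := (hasDerivAt_id y).mul (Real.hasDerivAt_log hy.ne')
    exact this.congr_deriv (by simp [mul_inv_cancel₀ hy.ne'])
  have h3 := (hL.sub h2).add (hasDerivAt_id y)
  exact h3.congr_deriv (by ring)

lemma hasDerivAt_gp {y : ℝ} (hy : 0 < y) :
    HasDerivAt (fun y => digamma y - Real.log y) (trigamma y - 1 / y) y := by
  have := (hasDerivAt_digamma hy).sub (Real.hasDerivAt_log hy.ne')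
  rw [one_div]; exact this

lemma taylor_side (α₁ α₂ : ℝ) (h1 : 0 < α₁) (h2 : 0 < α₂) :
    ∫ t in (0:ℝ)..(α₂ - α₁), (trigamma (α₁ + t) - 1 / (α₁ + t)) * (α₂ - α₁ - t) =
      (Real.log (Real.Gamma α₂) - α₂ * Real.log α₂ + α₂)
        - (Real.log (Real.Gamma α₁) - α₁ * Real.log α₁ + α₁)
        - (α₂ - α₁) * (digamma α₁ - Real.log α₁) := by
  set δ := α₂ - α₁ with hδ
  have hpos : ∀ t ∈ uIcc (0:ℝ) δ, 0 < α₁ + t := by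
    intro t ht
    rcases le_total (0:ℝ) δ with h | h
    · rw [uIcc_of_le h] at ht; linarith [ht.1]
    · rw [uIcc_of_ge h] at ht; have := ht.1; simp only [hδ] at this ⊢; linarith
  set H : ℝ → ℝ := fun t =>
    (Real.log (Real.Gamma (α₁ + t)) - (α₁ + t) * Real.log (α₁ + t) + (α₁ + t))
      + (δ - t) * (digamma (α₁ + t) - Real.log (α₁ + t)) with hH
  have hderiv : ∀ t ∈ uIcc (0:ℝ) δ,
      HasDerivAt H ((trigamma (α₁ + t) - 1 / (α₁ + t)) * (δ - t)) t := by
    intro t ht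
    have hyt := hpos t ht
    have hshift : HasDerivAt (fun t : ℝ => α₁ + t) 1 t := by
      simpa using (hasDerivAt_id t).const_add α₁
    have hA : HasDerivAt (fun t : ℝ =>
        Real.log (Real.Gamma (α₁ + t)) - (α₁ + t) * Real.log (α₁ + t) + (α₁ + t))
        (digamma (α₁ + t) - Real.log (α₁ + t)) t := by
      have := (hasDerivAt_g hyt).comp t hshift; rw [mul_one] at this; exact this
    have hB : HasDerivAt (fun t : ℝ => digamma (α₁ + t) - Real.log (α₁ + t))
        (trigamma (α₁ + t) - 1 / (α₁ + t)) t := by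
      have := (hasDerivAt_gp hyt).comp t hshift; rw [mul_one] at this; exact this
    have hC : HasDerivAt (fun t : ℝ => (δ - t) * (digamma (α₁ + t) - Real.log (α₁ + t)))
        ((-1) * (digamma (α₁ + t) - Real.log (α₁ + t))
          + (δ - t) * (trigamma (α₁ + t) - 1 / (α₁ + t))) t := by
      exact (((hasDerivAt_id t).const_sub δ)).mul hB
    have := hA.add hC
    rw [hH]
    exact this.congr_deriv (by ring)
  have hint : IntervalIntegrable
      (fun t => (trigamma (α₁ + t) - 1 / (α₁ + t)) * (δ - t)) MeasureTheory.volume 0 δ := by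
    apply ContinuousOn.intervalIntegrable
    have hmaps : ∀ t ∈ uIcc (0:ℝ) δ, α₁ + t ∈ Ioi (0:ℝ) := fun t ht => hpos t ht
    have hc1 : ContinuousOn (fun t : ℝ => α₁ + t) (uIcc (0:ℝ) δ) :=
      (continuous_const.add continuous_id).continuousOn
    refine ContinuousOn.mul (ContinuousOn.sub ?_ ?_) (by fun_prop)
    · exact continuousOn_trigamma.comp hc1 hmaps
    · exact ContinuousOn.div continuousOn_const hc1 fun t ht => (hpos t ht).ne'
  have := intervalIntegral.integral_eq_sub_of_hasDerivAt hderiv hint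
  rw [this]
  have hα : α₁ + δ = α₂ := by rw [hδ]; ring
  simp only [hH, hα]
  ring_nf

noncomputable def gpdf (a b x : ℝ) : ℝ :=
  x ^ (a - 1) * Real.exp (-x / b) / (Real.Gamma a * b ^ a)

lemma measurable_gpdf (a b : ℝ) : Measurable (gpdf a b) := by
  unfold gpdf; fun_prop

lemma gpdf_nonneg {a b x : ℝ} (ha : 0 < a) (hb : 0 < b) (hx : 0 < x) : 0 ≤ gpdf a b x := by
  unfold gpdf
  have := Real.Gamma_pos_of_pos ha
  positivity

lemma gpdf_pos {a b x : ℝ} (ha : 0 < a) (hb : 0 < b) (hx : 0 < x) : 0 < gpdf a b x := by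
  unfold gpdf
  have := Real.Gamma_pos_of_pos ha
  positivity

lemma gammaDist_eq_withDensity (a b : ℝ) :
    gammaDist a b =
      (volume.restrict (Ioi 0)).withDensity (fun x => ENNReal.ofReal (gpdf a b x)) := by
  rw [gammaDist, ← withDensity_indicator measurableSet_Ioi]
  congr 1
  ext x
  by_cases h : x ∈ Ioi (0:ℝ) <;> simp [h, indicator, gpdf]

lemma gammaDist_eq_gammaMeasure {a b : ℝ} (ha : 0 < a) (hb : 0 < b) :
    gammaDist a b = ProbabilityTheory.gammaMeasure a b⁻¹ := by
  rw [gammaDist, ProbabilityTheory.gammaMeasure]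
  apply withDensity_congr_ae
  have h0 : ∀ᵐ x : ℝ, x ≠ (0:ℝ) := by
    rw [ae_iff]
    simpa using measure_singleton (0:ℝ)
  filter_upwards [h0] with x hx
  rw [ProbabilityTheory.gammaPDF_eq]
  rcases lt_trichotomy x 0 with h | h | h
  · rw [if_neg (by simpa using not_lt.mpr h.le), if_neg (not_le.mpr h)]
  · exact absurd h hx
  · rw [if_pos (by simpa using h), if_pos h.le]
    congr 1
    rw [Real.inv_rpow hb.le]
    have : -x / b = -(b⁻¹ * x) := by field_simp
    rw [this]
    ring

lemma isProbabilityMeasure_gammaDist {a b : ℝ} (ha : 0 < a) (hb : 0 < b) :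
    IsProbabilityMeasure (gammaDist a b) := by
  rw [gammaDist_eq_gammaMeasure ha hb]
  exact ProbabilityTheory.isProbabilityMeasure_gammaMeasure ha (inv_pos.mpr hb)

lemma integral_gammaDist {a b : ℝ} (ha : 0 < a) (hb : 0 < b) (g : ℝ → ℝ) :
    ∫ x, g x ∂(gammaDist a b) = ∫ x in Ioi (0:ℝ), gpdf a b x * g x := by
  rw [gammaDist_eq_withDensity]
  have hm : Measurable fun x => (gpdf a b x).toNNReal := (measurable_gpdf a b).real_toNNReal
  rw [show (fun x => ENNReal.ofReal (gpdf a b x)) = (fun x => ((gpdf a b x).toNNReal : ℝ≥0∞))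
    from rfl, integral_withDensity_eq_integral_smul hm g]
  refine setIntegral_congr_fun measurableSet_Ioi fun x hx => ?_
  rw [NNReal.smul_def, Real.coe_toNNReal _ (gpdf_nonneg ha hb hx), smul_eq_mul]

lemma integrable_gammaDist_iff {a b : ℝ} (ha : 0 < a) (hb : 0 < b) (g : ℝ → ℝ) :
    Integrable g (gammaDist a b) ↔
      IntegrableOn (fun x => g x * gpdf a b x) (Ioi 0) := by
  rw [gammaDist_eq_withDensity, integrable_withDensity_iff ((measurable_gpdf a b).ennreal_ofReal)
    (Eventually.of_forall fun x => ENNReal.ofReal_lt_top)]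
  constructor <;> intro h <;>
    refine h.congr (ae_restrict_of_forall_mem measurableSet_Ioi fun x hx => ?_) <;>
    simp only [ENNReal.toReal_ofReal (gpdf_nonneg ha hb hx)]

noncomputable def Gp (a : ℝ) : ℝ := ∫ t in Ioi (0:ℝ), t ^ (a - 1) * (Real.log t * Real.exp (-t))

lemma int0 {a b : ℝ} (ha : 0 < a) (hb : 0 < b) :
    ∫ x in Ioi (0:ℝ), x ^ (a - 1) * Real.exp (-x / b) = Real.Gamma a * b ^ a := by
  have h := Real.integral_rpow_mul_exp_neg_mul_Ioi ha (inv_pos.mpr hb)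
  rw [show ∫ x in Ioi (0:ℝ), x ^ (a - 1) * Real.exp (-x / b)
      = ∫ x in Ioi (0:ℝ), x ^ (a - 1) * Real.exp (-(b⁻¹ * x)) by
    refine setIntegral_congr_fun measurableSet_Ioi fun x hx => ?_
    ring_nf, h, one_div, inv_inv, mul_comm]

lemma int1 {a b : ℝ} (ha : 0 < a) (hb : 0 < b) :
    ∫ x in Ioi (0:ℝ), x ^ (a - 1) * Real.exp (-x / b) * x
      = Real.Gamma a * b ^ a * (a * b) := by
  rw [show ∫ x in Ioi (0:ℝ), x ^ (a - 1) * Real.exp (-x / b) * x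
      = ∫ x in Ioi (0:ℝ), x ^ (a + 1 - 1) * Real.exp (-x / b) by
    refine setIntegral_congr_fun measurableSet_Ioi fun x hx => ?_
    rw [add_sub_cancel_right, show (a:ℝ) = (a-1) + 1 by ring, Real.rpow_add_one (ne_of_gt hx)]
    ring]
  rw [int0 (by linarith) hb, Real.Gamma_add_one ha.ne', Real.rpow_add_one hb.ne']
  ring

lemma integrableOn_poly_exp {c b : ℝ} (hc : -1 < c) (hb : 0 < b) :
    IntegrableOn (fun x => x ^ c * Real.exp (-x / b)) (Ioi (0:ℝ)) := by
  have h := integrableOn_rpow_mul_exp_neg_mul_rpow (p := 1) hc one_pos (inv_pos.mpr hb)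
  refine h.congr_fun (fun x hx => ?_) measurableSet_Ioi
  beta_reduce; rw [Real.rpow_one, neg_div, div_eq_mul_inv, mul_comm x b⁻¹, neg_mul]

lemma abs_log_le {ε x : ℝ} (hε : 0 < ε) (hx : 0 < x) :
    |Real.log x| ≤ (x ^ ε + x ^ (-ε)) / ε := by
  have hp1 := Real.rpow_pos_of_pos hx ε
  have hp2 := Real.rpow_pos_of_pos hx (-ε)
  have h1 : Real.log (x ^ (-ε)) ≤ x ^ (-ε) - 1 := Real.log_le_sub_one_of_pos hp2
  have h2 : Real.log (x ^ ε) ≤ x ^ ε - 1 := Real.log_le_sub_one_of_pos hp1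
  rw [Real.log_rpow hx] at h1 h2
  rw [le_div_iff₀ hε]
  rcases abs_cases (Real.log x) with ⟨h, _⟩ | ⟨h, _⟩ <;> rw [h] <;> nlinarith

lemma integrableOn_poly_exp_log {a b : ℝ} (ha : 0 < a) (hb : 0 < b) :
    IntegrableOn (fun x => x ^ (a - 1) * Real.exp (-x / b) * Real.log x) (Ioi (0:ℝ)) := by
  set ε := a / 2 with hε
  have hε0 : 0 < ε := by positivity
  have h1 : IntegrableOn (fun x => x ^ (a - 1 + ε) * Real.exp (-x / b)) (Ioi (0:ℝ)) :=
    integrableOn_poly_exp (by linarith) hb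
  have h2 : IntegrableOn (fun x => x ^ (a - 1 - ε) * Real.exp (-x / b)) (Ioi (0:ℝ)) :=
    integrableOn_poly_exp (by rw [hε]; linarith) hb
  refine Integrable.mono' (((h1.add h2).div_const ε)) ?_ ?_
  · exact (((measurable_gpdf a b).mul_const (Real.Gamma a * b ^ a)).mul
      Real.measurable_log).aestronglyMeasurable |>.congr (Eventually.of_forall fun x => by
        unfold gpdf
        have hC : Real.Gamma a * b ^ a ≠ 0 := by
          have := Real.Gamma_pos_of_pos ha
          positivity
        field_simp
        rfl)
  · rw [ae_restrict_iff' measurableSet_Ioi]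
    refine Eventually.of_forall fun x hx => ?_
    have hx0 : (0:ℝ) < x := hx
    have hxp := Real.rpow_pos_of_pos hx0 (a-1)
    have hep := Real.exp_pos (-x/b)
    rw [norm_mul, norm_mul, Real.norm_eq_abs, Real.norm_eq_abs, Real.norm_eq_abs,
      abs_of_pos hxp, abs_of_pos hep]
    have hlog := abs_log_le hε0 hx0
    have key : x ^ (a-1) * Real.exp (-x/b) * |Real.log x|
        ≤ x ^ (a-1) * Real.exp (-x/b) * ((x ^ ε + x ^ (-ε)) / ε) := by
      apply mul_le_mul_of_nonneg_left hlog (by positivity)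
    refine key.trans (le_of_eq ?_)
    simp only [Pi.add_apply]
    rw [show a - 1 - ε = a - 1 + (-ε) by ring, Real.rpow_add hx0, Real.rpow_add hx0]
    field_simp

lemma integrableOn_Gp {a : ℝ} (ha : 0 < a) :
    IntegrableOn (fun t => t ^ (a - 1) * (Real.log t * Real.exp (-t))) (Ioi (0:ℝ)) := by
  refine (integrableOn_poly_exp_log ha one_pos).congr_fun (fun x hx => ?_) measurableSet_Ioi
  simp only [div_one]
  ring

lemma Gamma_eq_int {a : ℝ} (ha : 0 < a) :
    ∫ t in Ioi (0:ℝ), t ^ (a - 1) * Real.exp (-t) = Real.Gamma a := by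
  rw [Real.Gamma_eq_integral ha]
  refine setIntegral_congr_fun measurableSet_Ioi fun x hx => ?_
  ring

lemma intlog {a b : ℝ} (ha : 0 < a) (hb : 0 < b) :
    ∫ x in Ioi (0:ℝ), x ^ (a - 1) * Real.exp (-x / b) * Real.log x
      = (Gp a + Real.Gamma a * Real.log b) * b ^ a := by
  have hsub := MeasureTheory.integral_comp_mul_left_Ioi
    (fun x => x ^ (a - 1) * Real.exp (-x / b) * Real.log x) 0 hb
  rw [mul_zero] at hsub
  beta_reduce at hsub
  -- hsub : ∫ t in Ioi 0, F (b * t) = b⁻¹ • ∫ x in Ioi 0, F x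
  have key : ∫ t in Ioi (0:ℝ), (b * t) ^ (a - 1) * Real.exp (-(b * t) / b) * Real.log (b * t)
      = b ^ (a - 1) * ((Gp a + Real.Gamma a * Real.log b)) := by
    have hcongr : ∀ t ∈ Ioi (0:ℝ),
        (b * t) ^ (a - 1) * Real.exp (-(b * t) / b) * Real.log (b * t)
        = b ^ (a - 1) * (t ^ (a - 1) * (Real.log t * Real.exp (-t))
            + Real.log b * (t ^ (a - 1) * Real.exp (-t))) := by
      intro t ht
      have ht0 : (0:ℝ) < t := ht
      rw [Real.mul_rpow hb.le ht0.le, Real.log_mul hb.ne' ht0.ne',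
        show -(b * t) / b = -t by field_simp]
      ring
    rw [setIntegral_congr_fun measurableSet_Ioi hcongr, MeasureTheory.integral_const_mul,
      integral_add (integrableOn_Gp ha) (Integrable.const_mul (by
        refine (integrableOn_poly_exp (c := a - 1) (by linarith) one_pos).congr_fun
          (fun x hx => by simp only [div_one]) measurableSet_Ioi) _),
      MeasureTheory.integral_const_mul, Gamma_eq_int ha]
    rw [Gp]
    ring
  rw [key] at hsub
  have : (∫ x in Ioi (0:ℝ), x ^ (a - 1) * Real.exp (-x / b) * Real.log x)
      = b * (b ^ (a - 1) * ((Gp a + Real.Gamma a * Real.log b))) := by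
    rw [hsub, smul_eq_mul, ← mul_assoc, mul_inv_cancel₀ hb.ne', one_mul]
  rw [this, ← mul_assoc, show b * b ^ (a-1) = b ^ a by
    rw [show a = (a - 1) + 1 by ring, Real.rpow_add_one hb.ne']; ring]
  ring

lemma Gamma_rpow_ne (a b : ℝ) (ha : 0 < a) (hb : 0 < b) : Real.Gamma a * b ^ a ≠ 0 := by
  have := Real.Gamma_pos_of_pos ha
  positivity

lemma integral_log_gammaDist {a b : ℝ} (ha : 0 < a) (hb : 0 < b) :
    ∫ x, Real.log x ∂(gammaDist a b) = Gp a / Real.Gamma a + Real.log b := by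
  rw [integral_gammaDist ha hb]
  rw [show ∫ x in Ioi (0:ℝ), gpdf a b x * Real.log x
      = ∫ x in Ioi (0:ℝ), (Real.Gamma a * b ^ a)⁻¹ * (x ^ (a-1) * Real.exp (-x/b) * Real.log x)
    from setIntegral_congr_fun measurableSet_Ioi fun x hx => by unfold gpdf; ring]
  rw [MeasureTheory.integral_const_mul, intlog ha hb]
  have h1 := Real.Gamma_pos_of_pos ha
  have h2 := Real.rpow_pos_of_pos hb a
  field_simp

lemma integral_id_gammaDist {a b : ℝ} (ha : 0 < a) (hb : 0 < b) :
    ∫ x, x ∂(gammaDist a b) = a * b := by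
  rw [integral_gammaDist ha hb]
  rw [show ∫ x in Ioi (0:ℝ), gpdf a b x * x
      = ∫ x in Ioi (0:ℝ), (Real.Gamma a * b ^ a)⁻¹ * (x ^ (a-1) * Real.exp (-x/b) * x)
    from setIntegral_congr_fun measurableSet_Ioi fun x hx => by unfold gpdf; ring]
  rw [MeasureTheory.integral_const_mul, int1 ha hb]
  have h1 := Real.Gamma_pos_of_pos ha
  have h2 := Real.rpow_pos_of_pos hb a
  field_simp

lemma integrable_log_gammaDist {a b : ℝ} (ha : 0 < a) (hb : 0 < b) :
    Integrable (fun x => Real.log x) (gammaDist a b) := by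
  rw [integrable_gammaDist_iff ha hb]
  refine IntegrableOn.congr_fun
    (f := fun x => (Real.Gamma a * b ^ a)⁻¹ * (x ^ (a-1) * Real.exp (-x/b) * Real.log x))
    ((integrableOn_poly_exp_log ha hb).const_mul _) (fun x hx => ?_) measurableSet_Ioi
  unfold gpdf; ring

lemma integrable_id_gammaDist {a b : ℝ} (ha : 0 < a) (hb : 0 < b) :
    Integrable (fun x => x) (gammaDist a b) := by
  rw [integrable_gammaDist_iff ha hb]
  refine IntegrableOn.congr_fun
    (f := fun x => (Real.Gamma a * b ^ a)⁻¹ * (x ^ a * Real.exp (-x/b)))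
    ((integrableOn_poly_exp (c := a) (by linarith) hb).const_mul _)
    (fun x hx => ?_) measurableSet_Ioi
  have hx0 : (0:ℝ) < x := hx
  have hxa : x ^ (a - 1) * x = x ^ a := by
    rw [← Real.rpow_add_one hx0.ne' (a - 1), sub_add_cancel]
  simp only
  unfold gpdf
  rw [← hxa]
  ring

lemma log_rnDeriv_ae {α₁ β₁ α₂ β₂ : ℝ} (hα₁ : 0 < α₁) (hβ₁ : 0 < β₁)
    (hα₂ : 0 < α₂) (hβ₂ : 0 < β₂) :
    (fun x => Real.log ((gammaDist α₁ β₁).rnDeriv (gammaDist α₂ β₂) x).toReal)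
      =ᵐ[gammaDist α₁ β₁]
    (fun x => (α₁ - α₂) * Real.log x + (β₂⁻¹ - β₁⁻¹) * x
      + (Real.log (Real.Gamma α₂ * β₂ ^ α₂) - Real.log (Real.Gamma α₁ * β₁ ^ α₁))) := by
  set ν := volume.restrict (Ioi (0:ℝ)) with hν
  set f₁ := fun x => ENNReal.ofReal (gpdf α₁ β₁ x) with hf₁
  set f₂ := fun x => ENNReal.ofReal (gpdf α₂ β₂ x) with hf₂
  have hP₁ : gammaDist α₁ β₁ = ν.withDensity f₁ := gammaDist_eq_withDensity _ _
  have hP₂ : gammaDist α₂ β₂ = ν.withDensity f₂ := gammaDist_eq_withDensity _ _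
  haveI : SigmaFinite (ν.withDensity f₁) :=
    SigmaFinite.withDensity_of_ne_top (Eventually.of_forall fun x => ENNReal.ofReal_ne_top)
  have hmem : ∀ᵐ x ∂ν, x ∈ Ioi (0:ℝ) := ae_restrict_mem measurableSet_Ioi
  have hne0 : ∀ᵐ x ∂ν, f₂ x ≠ 0 := by
    filter_upwards [hmem] with x hx
    simp only [hf₂, ne_eq, ENNReal.ofReal_eq_zero, not_le]
    exact gpdf_pos hα₂ hβ₂ hx
  have h1 := Measure.rnDeriv_withDensity_right (ν.withDensity f₁) ν
    ((measurable_gpdf α₂ β₂).ennreal_ofReal).aemeasurable hne0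
    (Eventually.of_forall fun x => ENNReal.ofReal_ne_top)
  have h2 := Measure.rnDeriv_withDensity ν ((measurable_gpdf α₁ β₁).ennreal_ofReal)
  have hac : ν.withDensity f₁ ≪ ν := withDensity_absolutelyContinuous _ _
  rw [hP₁, hP₂]
  have hall : ∀ᵐ x ∂ν, ((ν.withDensity f₁).rnDeriv (ν.withDensity f₂) x = (f₂ x)⁻¹ * f₁ x
      ∧ x ∈ Ioi (0:ℝ)) := by
    filter_upwards [h1, h2, hmem] with x hx1 hx2 hx3
    exact ⟨by rw [hx1, hx2], hx3⟩
  refine Eventually.filter_mono hac.ae_le ?_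
  filter_upwards [hall] with x hx
  obtain ⟨hrn, hx0⟩ := hx
  have hx0' : (0:ℝ) < x := hx0
  have hp₁ := gpdf_pos hα₁ hβ₁ hx0'
  have hp₂ := gpdf_pos hα₂ hβ₂ hx0'
  rw [hrn, hf₁, hf₂]
  rw [ENNReal.toReal_mul, ENNReal.toReal_inv, ENNReal.toReal_ofReal hp₁.le,
    ENNReal.toReal_ofReal hp₂.le]
  have hC₁ := Gamma_rpow_ne α₁ β₁ hα₁ hβ₁
  have hC₂ := Gamma_rpow_ne α₂ β₂ hα₂ hβ₂
  have hxp₁ : (0:ℝ) < x ^ (α₁ - 1) := Real.rpow_pos_of_pos hx0' _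
  have hxp₂ : (0:ℝ) < x ^ (α₂ - 1) := Real.rpow_pos_of_pos hx0' _
  have he₁ : (0:ℝ) < Real.exp (-x / β₁) := Real.exp_pos _
  have he₂ : (0:ℝ) < Real.exp (-x / β₂) := Real.exp_pos _
  rw [Real.log_mul (by positivity) (by positivity), Real.log_inv]
  unfold gpdf
  rw [Real.log_div (by positivity) hC₂, Real.log_div (by positivity) hC₁,
    Real.log_mul hxp₁.ne' he₁.ne', Real.log_mul hxp₂.ne' he₂.ne',
    Real.log_rpow hx0', Real.log_rpow hx0', Real.log_exp, Real.log_exp]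
  have hd₁ : -x / β₁ = -(x * β₁⁻¹) := by ring
  have hd₂ : -x / β₂ = -(x * β₂⁻¹) := by ring
  rw [hd₁, hd₂]
  ring

lemma klDiv_value {α₁ β₁ α₂ β₂ : ℝ} (hα₁ : 0 < α₁) (hβ₁ : 0 < β₁)
    (hα₂ : 0 < α₂) (hβ₂ : 0 < β₂) :
    klDiv (gammaDist α₁ β₁) (gammaDist α₂ β₂)
      = (α₁ - α₂) * (Gp α₁ / Real.Gamma α₁ + Real.log β₁) + (β₂⁻¹ - β₁⁻¹) * (α₁ * β₁)
        + (Real.log (Real.Gamma α₂ * β₂ ^ α₂) - Real.log (Real.Gamma α₁ * β₁ ^ α₁)) := by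
  haveI := isProbabilityMeasure_gammaDist hα₁ hβ₁
  rw [klDiv, integral_congr_ae (log_rnDeriv_ae hα₁ hβ₁ hα₂ hβ₂)]
  have hilog := (integrable_log_gammaDist hα₁ hβ₁).const_mul (α₁ - α₂)
  have hiid := (integrable_id_gammaDist hα₁ hβ₁).const_mul (β₂⁻¹ - β₁⁻¹)
  rw [show (fun x => (α₁ - α₂) * Real.log x + (β₂⁻¹ - β₁⁻¹) * x
      + (Real.log (Real.Gamma α₂ * β₂ ^ α₂) - Real.log (Real.Gamma α₁ * β₁ ^ α₁)))
      = (fun x => ((fun x => (α₁ - α₂) * Real.log x) + (fun x => (β₂⁻¹ - β₁⁻¹) * x)) x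
      + (Real.log (Real.Gamma α₂ * β₂ ^ α₂) - Real.log (Real.Gamma α₁ * β₁ ^ α₁))) from rfl,
    integral_add (hilog.add hiid) (integrable_const _)]
  simp only [Pi.add_apply]
  rw [integral_add hilog hiid,
    MeasureTheory.integral_const_mul, MeasureTheory.integral_const_mul, integral_log_gammaDist hα₁ hβ₁,
    integral_id_gammaDist hα₁ hβ₁, MeasureTheory.integral_const]
  simp


lemma digamma_eq_Gp_div {a : ℝ} (ha : 0 < a) : digamma a = Gp a / Real.Gamma a := by
  have hG : HasDerivAt Real.Gamma (Gp a) a := hasDerivAt_Gamma_my ha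
  have h : HasDerivAt (fun y => Real.log (Real.Gamma y)) (Gp a / Real.Gamma a) a := by
    have := (Real.hasDerivAt_log (Real.Gamma_pos_of_pos ha).ne').comp a hG
    rw [div_eq_mul_inv, mul_comm]; exact this
  exact h.deriv

theorem klDiv_gamma_gamma_same_mean (α₁ β₁ α₂ β₂ : ℝ) (hα₁ : 0 < α₁) (hβ₁ : 0 < β₁)
    (hα₂ : 0 < α₂) (hβ₂ : 0 < β₂) (hmean : α₁ * β₁ = α₂ * β₂) :
    klDiv (gammaDist α₁ β₁) (gammaDist α₂ β₂) =
      ∫ t in (0 : ℝ)..(α₂ - α₁), (trigamma (α₁ + t) - 1 / (α₁ + t)) * (α₂ - α₁ - t) := by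
  rw [klDiv_value hα₁ hβ₁ hα₂ hβ₂, taylor_side α₁ α₂ hα₁ hα₂,
    ← digamma_eq_Gp_div hα₁,
    Real.log_mul (Real.Gamma_pos_of_pos hα₂).ne' (Real.rpow_pos_of_pos hβ₂ _).ne',
    Real.log_mul (Real.Gamma_pos_of_pos hα₁).ne' (Real.rpow_pos_of_pos hβ₁ _).ne',
    Real.log_rpow hβ₂, Real.log_rpow hβ₁]
  have e1 : (β₂⁻¹ - β₁⁻¹) * (α₁ * β₁) = α₂ - α₁ := by
    field_simp
    linear_combination hmean
  have e2 : Real.log β₂ = Real.log β₁ + Real.log α₁ - Real.log α₂ := by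
    have h := congrArg Real.log hmean
    rw [Real.log_mul hα₁.ne' hβ₁.ne', Real.log_mul hα₂.ne' hβ₂.ne'] at h
    linarith
  linear_combination e1 + α₂ * e2
end

section
/- Let f : [0,1] → ℝ be continuous with Haar wavelet coefficients θ_{i,j} = ∫₀¹ f·ψ_{i,j}, let k ∈ ℕ and n = 2^k, and suppose Σ_{i≥k} 2^{i/2}·max_{1≤j≤2^i} |θ_{i,j}| < ∞. Then Σ_{ℓ=1}^{n} ( f(ℓ/n) − n·∫_{(ℓ−1)/n}^{ℓ/n} f(x) dx )² ≤ n·( Σ_{i=k}^∞ 2^{i/2}·max_{1≤j≤2^i} |θ_{i,j}| )². -/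
open MeasureTheory Real Set intervalIntegral

/-- The Haar wavelet `ψ_{i,j}` on `[0,1]`, for `i ∈ ℕ` and `j = 1, …, 2^i`. -/
noncomputable def haar (i j : ℕ) (x : ℝ) : ℝ :=
  if ((j : ℝ) - 1) / 2 ^ i < x ∧ x ≤ ((j : ℝ) - 1 / 2) / 2 ^ i then (2 : ℝ) ^ ((i : ℝ) / 2)
  else if ((j : ℝ) - 1 / 2) / 2 ^ i < x ∧ x ≤ (j : ℝ) / 2 ^ i then -((2 : ℝ) ^ ((i : ℝ) / 2))
  else 0

/-- The Haar wavelet coefficient `θ_{i,j} = ∫₀¹ f ψ_{i,j}`. -/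
noncomputable def haarCoef (f : ℝ → ℝ) (i j : ℕ) : ℝ :=
  ∫ x in (0 : ℝ)..1, f x * haar i j x

/-- `max_{1 ≤ j ≤ 2^i} |θ_{i,j}|`. -/
noncomputable def maxAbsCoef (f : ℝ → ℝ) (i : ℕ) : ℝ :=
  (Finset.Icc 1 (2 ^ i)).sup' (Finset.nonempty_Icc.mpr Nat.one_le_two_pow)
    fun j => |haarCoef f i j|

lemma haarCoef_eq (f : ℝ → ℝ) (hf : IntegrableOn f (Set.Icc 0 1)) (i j : ℕ)
    (hj1 : 1 ≤ j) (hj2 : j ≤ 2 ^ i) :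
    haarCoef f i j = 2 ^ ((i : ℝ) / 2) *
      ((∫ x in Ioc (((j : ℝ) - 1) / 2 ^ i) (((j : ℝ) - 1/2) / 2 ^ i), f x) -
       ∫ x in Ioc (((j : ℝ) - 1/2) / 2 ^ i) ((j : ℝ) / 2 ^ i), f x) := by
  set a : ℝ := ((j : ℝ) - 1) / 2 ^ i with ha
  set b : ℝ := ((j : ℝ) - 1/2) / 2 ^ i with hb
  set c : ℝ := (j : ℝ) / 2 ^ i with hc
  have h2i : (0:ℝ) < 2 ^ i := by positivity
  have hab : a < b := by rw [ha, hb]; apply div_lt_div_of_pos_right _ h2i; linarith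
  have hbc : b < c := by rw [hb, hc]; apply div_lt_div_of_pos_right _ h2i; linarith
  have ha0 : 0 ≤ a := by
    rw [ha]; apply div_nonneg _ h2i.le
    have : (1:ℝ) ≤ j := by exact_mod_cast hj1
    linarith
  have hc1 : c ≤ 1 := by
    rw [hc, div_le_one h2i]; exact_mod_cast hj2
  have hsub1 : Ioc a b ⊆ Set.Icc 0 1 := fun x hx =>
    ⟨le_of_lt (lt_of_le_of_lt ha0 hx.1), hx.2.trans (hbc.le.trans hc1)⟩
  have hsub2 : Ioc b c ⊆ Set.Icc 0 1 := fun x hx =>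
    ⟨le_of_lt (lt_of_le_of_lt (ha0.trans hab.le) hx.1), hx.2.trans hc1⟩
  have hsub1' : Ioc a b ⊆ Ioc 0 1 := fun x hx =>
    ⟨lt_of_le_of_lt ha0 hx.1, hx.2.trans (hbc.le.trans hc1)⟩
  have hsub2' : Ioc b c ⊆ Ioc 0 1 := fun x hx =>
    ⟨lt_of_le_of_lt (ha0.trans hab.le) hx.1, hx.2.trans hc1⟩
  have key : ∀ x, f x * haar i j x =
      (Ioc a b).indicator (fun x => 2 ^ ((i : ℝ)/2) * f x) x +
      (Ioc b c).indicator (fun x => -(2 ^ ((i : ℝ)/2)) * f x) x := by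
    intro x
    unfold haar
    rw [← ha, ← hb, ← hc]
    by_cases h1 : a < x ∧ x ≤ b
    · have h2 : ¬ (b < x ∧ x ≤ c) := by rintro ⟨hbx, -⟩; exact absurd h1.2 (not_le.2 hbx)
      rw [if_pos h1,
        Set.indicator_of_mem (mem_Ioc.2 h1),
        Set.indicator_of_notMem (fun hx => h2 (mem_Ioc.1 hx))]
      ring
    · by_cases h2 : b < x ∧ x ≤ c
      · rw [if_neg h1, if_pos h2,
          Set.indicator_of_notMem (fun hx => h1 (mem_Ioc.1 hx)),
          Set.indicator_of_mem (mem_Ioc.2 h2)]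
        ring
      · rw [if_neg h1, if_neg h2,
          Set.indicator_of_notMem (fun hx => h1 (mem_Ioc.1 hx)),
          Set.indicator_of_notMem (fun hx => h2 (mem_Ioc.1 hx))]
        ring
  have hInt1 : IntegrableOn (fun x => 2 ^ ((i : ℝ)/2) * f x) (Ioc a b) :=
    (hf.mono_set hsub1).const_mul _
  have hInt2 : IntegrableOn (fun x => -(2 ^ ((i : ℝ)/2)) * f x) (Ioc b c) :=
    (hf.mono_set hsub2).const_mul _
  rw [haarCoef, intervalIntegral.integral_of_le zero_le_one]
  simp_rw [key]
  rw [MeasureTheory.integral_add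
      ((hInt1.integrable_indicator measurableSet_Ioc).integrableOn)
      ((hInt2.integrable_indicator measurableSet_Ioc).integrableOn),
    MeasureTheory.setIntegral_indicator measurableSet_Ioc,
    MeasureTheory.setIntegral_indicator measurableSet_Ioc,
    Set.inter_eq_right.2 hsub1', Set.inter_eq_right.2 hsub2',
    MeasureTheory.integral_const_mul, MeasureTheory.integral_const_mul]
  ring

lemma abs_haarCoef_le (f : ℝ → ℝ) (i j : ℕ) (hj1 : 1 ≤ j) (hj2 : j ≤ 2 ^ i) :
    |haarCoef f i j| ≤ maxAbsCoef f i :=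
  Finset.le_sup' (fun j => |haarCoef f i j|) (Finset.mem_Icc.2 ⟨hj1, hj2⟩)

lemma maxAbsCoef_nonneg (f : ℝ → ℝ) (i : ℕ) : 0 ≤ maxAbsCoef f i :=
  (abs_nonneg _).trans (abs_haarCoef_le f i 1 le_rfl Nat.one_le_two_pow)

lemma key_bound (f : ℝ → ℝ) (hf : ContinuousOn f (Set.Icc 0 1)) (k ℓ : ℕ)
    (hl1 : 1 ≤ ℓ) (hl2 : ℓ ≤ 2 ^ k)
    (hsum : Summable fun i : ℕ => (2:ℝ) ^ (((k + i : ℕ) : ℝ) / 2) * maxAbsCoef f (k + i)) :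
    |f ((ℓ:ℝ) / 2^k) - 2^k * ∫ x in Ioc (((ℓ:ℝ) - 1)/2^k) ((ℓ:ℝ)/2^k), f x| ≤
      ∑' i : ℕ, (2:ℝ) ^ (((k + i : ℕ) : ℝ) / 2) * maxAbsCoef f (k + i) := by
  have hfi : IntegrableOn f (Set.Icc 0 1) := hf.integrableOn_Icc
  set p : ℝ := (ℓ:ℝ) / 2^k with hp
  have h2k : (0:ℝ) < 2 ^ k := by positivity
  have hl1' : (1:ℝ) ≤ (ℓ:ℝ) := by exact_mod_cast hl1
  have hp0 : 0 < p := by positivity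
  have hp1 : p ≤ 1 := by rw [hp, div_le_one h2k]; exact_mod_cast hl2
  -- the averages
  set A : ℕ → ℝ := fun i => 2^(k+i) * ∫ x in Ioc (p - (2^(k+i))⁻¹) p, f x with hA
  have hpe : ∀ i : ℕ, (2:ℝ)^(k+i) ≠ 0 := fun i => by positivity
  have hlow : ∀ i : ℕ, (0:ℝ) ≤ p - (2^(k+i))⁻¹ := by
    intro i
    have h1 : ((2:ℝ)^(k+i))⁻¹ ≤ (2^k)⁻¹ := by
      apply inv_anti₀ h2k
      apply pow_le_pow_right₀ one_le_two (Nat.le_add_right _ _)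
    have h2 : ((2:ℝ)^k)⁻¹ ≤ p := by
      rw [hp, inv_eq_one_div]
      gcongr
    linarith
  have hsubIcc : ∀ i : ℕ, Ioc (p - (2^(k+i))⁻¹) p ⊆ Set.Icc 0 1 := fun i x hx =>
    ⟨le_of_lt (lt_of_le_of_lt (hlow i) hx.1), hx.2.trans hp1⟩
  -- telescoping identity
  have tele : ∀ i : ℕ, A (i+1) - A i
      = -((2:ℝ) ^ (((k + i : ℕ) : ℝ) / 2) * haarCoef f (k+i) (ℓ * 2^i)) := by
    intro i
    set m := k + i with hm
    have hj1 : 1 ≤ ℓ * 2^i := Nat.one_le_iff_ne_zero.2 (by positivity)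
    have hj2 : ℓ * 2^i ≤ 2 ^ m := by
      rw [hm, pow_add]; exact Nat.mul_le_mul_right _ hl2
    have hcoef := haarCoef_eq f hfi m (ℓ * 2^i) hj1 hj2
    have e1 : ((ℓ * 2^i : ℕ) : ℝ) / 2 ^ m = p := by
      rw [hp, hm]; push_cast; rw [pow_add]; field_simp
    have e2 : (((ℓ * 2^i : ℕ) : ℝ) - 1) / 2 ^ m = p - (2^m)⁻¹ := by
      rw [hp, hm]; push_cast; rw [pow_add]; field_simp
    have e3 : (((ℓ * 2^i : ℕ) : ℝ) - 1/2) / 2 ^ m = p - (2^(m+1))⁻¹ := by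
      rw [hp, hm]; push_cast; rw [pow_add, pow_add]; field_simp; ring
    rw [e1, e2, e3] at hcoef
    -- split the level-m average
    have hmono : p - (2^m)⁻¹ ≤ p - (2^(m+1))⁻¹ := by
      have : ((2:ℝ)^(m+1))⁻¹ ≤ (2^m)⁻¹ := by
        apply inv_anti₀ (by positivity)
        apply pow_le_pow_right₀ one_le_two (Nat.le_succ _)
      linarith
    have hmono2 : p - (2^(m+1))⁻¹ ≤ p := by
      have : (0:ℝ) < (2^(m+1))⁻¹ := by positivity
      linarith
    have hsplit : (∫ x in Ioc (p - (2^m)⁻¹) p, f x)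
        = (∫ x in Ioc (p - (2^m)⁻¹) (p - (2^(m+1))⁻¹), f x)
          + ∫ x in Ioc (p - (2^(m+1))⁻¹) p, f x := by
      rw [← MeasureTheory.setIntegral_union]
      · rw [Set.Ioc_union_Ioc_eq_Ioc hmono hmono2]
      · exact Set.Ioc_disjoint_Ioc_of_le le_rfl
      · exact measurableSet_Ioc
      · exact hfi.mono_set (fun x hx => (hsubIcc i) ⟨lt_of_lt_of_le hx.1 le_rfl, hx.2.trans hmono2⟩)
      · have : k + (i+1) = m + 1 := by omega
        exact hfi.mono_set (fun x hx => (hsubIcc (i+1)) (by rw [this]; exact hx))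
    have hrpow : (2:ℝ) ^ ((m:ℝ)/2) * (2:ℝ) ^ ((m:ℝ)/2) = 2 ^ m := by
      rw [← Real.rpow_add two_pos, ← Real.rpow_natCast 2 m]
      norm_num
    have hA1 : A (i+1) = 2^(m+1) * ∫ x in Ioc (p - (2^(m+1))⁻¹) p, f x := by
      simp only [hA]; rw [show k+(i+1) = m+1 by omega]
    have hA0 : A i = 2^m * ((∫ x in Ioc (p - (2^m)⁻¹) (p - (2^(m+1))⁻¹), f x)
          + ∫ x in Ioc (p - (2^(m+1))⁻¹) p, f x) := by
      simp only [hA, ← hm, hsplit]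
    rw [hA1, hA0, hcoef]
    have : (2:ℝ) ^ ((m:ℝ)/2) * ((2:ℝ) ^ ((m:ℝ)/2) * ((∫ x in Ioc (p - (2^m)⁻¹) (p - (2^(m+1))⁻¹), f x) - ∫ x in Ioc (p - (2^(m+1))⁻¹) p, f x))
        = 2^m * ((∫ x in Ioc (p - (2^m)⁻¹) (p - (2^(m+1))⁻¹), f x) - ∫ x in Ioc (p - (2^(m+1))⁻¹) p, f x) := by
      rw [← mul_assoc, hrpow]
    rw [← hm] at *
    rw [this]
    rw [pow_succ]
    ring
  -- convergence of the averages to f p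
  have hconv : Filter.Tendsto A Filter.atTop (nhds (f p)) := by
    rw [Metric.tendsto_atTop]
    intro ε hε
    have hcont := hf p ⟨hp0.le, hp1⟩
    rw [Metric.continuousWithinAt_iff] at hcont
    obtain ⟨δ, hδ, hδε⟩ := hcont (ε/2) (by linarith)
    obtain ⟨N, hN⟩ := exists_pow_lt_of_lt_one hδ (by norm_num : (1:ℝ)/2 < 1)
    refine ⟨N, fun i hi => ?_⟩
    set εi : ℝ := ((2:ℝ)^(k+i))⁻¹ with hεi
    have hεi0 : 0 < εi := by positivity
    have hεiδ : εi < δ := by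
      calc εi = ((1:ℝ)/2)^(k+i) := by rw [hεi, one_div, inv_pow]
        _ ≤ ((1:ℝ)/2)^N := pow_le_pow_of_le_one (by norm_num) (by norm_num)
              (le_trans hi (Nat.le_add_left _ _))
        _ < δ := hN
    set s : Set ℝ := Ioc (p - εi) p with hs
    have hvol : volume s = ENNReal.ofReal εi := by
      rw [hs, Real.volume_Ioc]; ring_nf
    have hvolfin : volume s < ⊤ := by rw [hvol]; exact ENNReal.ofReal_lt_top
    have hintf : IntegrableOn f s := hfi.mono_set (hsubIcc i)
    have hkey : A i - f p = 2^(k+i) * ∫ x in s, (f x - f p) := by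
      rw [MeasureTheory.integral_sub hintf
        (MeasureTheory.integrableOn_const hvolfin.ne)]
      rw [MeasureTheory.setIntegral_const, measureReal_def, hvol,
        ENNReal.toReal_ofReal hεi0.le, smul_eq_mul]
      have hone : (2:ℝ)^(k+i) * εi = 1 := mul_inv_cancel₀ (hpe i)
      simp only [hA]
      rw [← hεi, ← hs, mul_sub, ← mul_assoc, hone, one_mul]
    have hbound : ‖∫ x in s, (f x - f p)‖ ≤ ε/2 * (volume s).toReal := by
      refine MeasureTheory.norm_setIntegral_le_of_norm_le_const hvolfin ?_
      intro x hx
      have hx1 : x ∈ Set.Icc (0:ℝ) 1 := hsubIcc i hx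
      have hdist : dist x p < δ := by
        rw [Real.dist_eq, abs_of_nonpos (by linarith [hx.2])]
        have := hx.1
        simp only [hs, mem_Ioc] at hx
        linarith [hεiδ]
      exact le_of_lt (hδε hx1 hdist)
    rw [Real.dist_eq, hkey, abs_mul, abs_of_pos (by positivity : (0:ℝ) < (2:ℝ)^(k+i))]
    calc (2:ℝ)^(k+i) * |∫ x in s, (f x - f p)| ≤ 2^(k+i) * (ε/2 * (volume s).toReal) := by
          apply mul_le_mul_of_nonneg_left _ (by positivity)
          exact hbound
      _ = ε/2 := by
          rw [hvol, ENNReal.toReal_ofReal hεi0.le]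
          have hone : (2:ℝ)^(k+i) * εi = 1 := mul_inv_cancel₀ (hpe i)
          rw [mul_comm (ε/2) εi, ← mul_assoc, hone, one_mul]
      _ < ε := by linarith
  -- summation
  set g : ℕ → ℝ := fun i => (2:ℝ) ^ (((k + i : ℕ) : ℝ) / 2) * maxAbsCoef f (k + i) with hg
  set d : ℕ → ℝ := fun i => A (i+1) - A i with hd
  have hdg : ∀ i, ‖d i‖ ≤ g i := by
    intro i
    have hj1 : 1 ≤ ℓ * 2^i := Nat.one_le_iff_ne_zero.2 (by positivity)
    have hj2 : ℓ * 2^i ≤ 2 ^ (k+i) := by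
      rw [pow_add]; exact Nat.mul_le_mul_right _ hl2
    simp only [hd, hg]
    rw [tele i, norm_neg, Real.norm_eq_abs, abs_mul,
      abs_of_nonneg (by positivity : (0:ℝ) ≤ (2:ℝ) ^ (((k + i : ℕ) : ℝ) / 2))]
    exact mul_le_mul_of_nonneg_left (abs_haarCoef_le f (k+i) (ℓ*2^i) hj1 hj2) (by positivity)
  have hds : Summable d := Summable.of_norm_bounded hsum hdg
  have hdnorm : Summable (fun i => ‖d i‖) :=
    Summable.of_nonneg_of_le (fun i => norm_nonneg _) hdg hsum
  have hpartial : Filter.Tendsto (fun N => ∑ i ∈ Finset.range N, d i)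
      Filter.atTop (nhds (f p - A 0)) := by
    apply Filter.Tendsto.congr (fun N => (Finset.sum_range_sub A N).symm)
    exact hconv.sub_const (A 0)
  have htsum : ∑' i, d i = f p - A 0 :=
    tendsto_nhds_unique hds.hasSum.tendsto_sum_nat hpartial
  have hA0eq : A 0 = 2^k * ∫ x in Ioc (((ℓ:ℝ)-1)/2^k) p, f x := by
    simp only [hA, Nat.add_zero]
    congr 2
    rw [hp]; field_simp
  have hgoal : |f p - A 0| ≤ ∑' i, g i := by
    calc |f p - A 0| = |∑' i, d i| := by rw [htsum]
      _ ≤ ∑' i, ‖d i‖ := by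
          rw [← Real.norm_eq_abs]
          exact norm_tsum_le_tsum_norm hdnorm
      _ ≤ ∑' i, g i := Summable.tsum_le_tsum hdg hdnorm hsum
  rw [← hA0eq]
  exact hgoal


theorem sum_sq_sample_sub_average_le (f : ℝ → ℝ) (hf : ContinuousOn f (Set.Icc 0 1))
    (k : ℕ) (n : ℕ) (hn : n = 2 ^ k)
    (hsum : Summable fun i : ℕ =>
      (2 : ℝ) ^ (((k + i : ℕ) : ℝ) / 2) * maxAbsCoef f (k + i)) :
    ∑ ℓ ∈ Finset.Icc 1 n,
        (f ((ℓ : ℝ) / n) - n * ∫ x in (((ℓ : ℝ) - 1) / n)..((ℓ : ℝ) / n), f x) ^ 2 ≤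
      n * (∑' i : ℕ, (2 : ℝ) ^ (((k + i : ℕ) : ℝ) / 2) * maxAbsCoef f (k + i)) ^ 2 := by
  set S : ℝ := ∑' i : ℕ, (2 : ℝ) ^ (((k + i : ℕ) : ℝ) / 2) * maxAbsCoef f (k + i) with hS
  have hcast : ((n:ℕ):ℝ) = (2:ℝ)^k := by rw [hn]; push_cast; ring
  have hterm : ∀ ℓ ∈ Finset.Icc 1 n,
      (f ((ℓ : ℝ) / n) - n * ∫ x in (((ℓ : ℝ) - 1) / n)..((ℓ : ℝ) / n), f x) ^ 2 ≤ S ^ 2 := by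
    intro ℓ hl
    obtain ⟨hl1, hl2⟩ := Finset.mem_Icc.1 hl
    have hl2' : ℓ ≤ 2 ^ k := hn ▸ hl2
    have hb := key_bound f hf k ℓ hl1 hl2' hsum
    have hle : ((ℓ:ℝ)-1)/2^k ≤ (ℓ:ℝ)/2^k := by
      apply div_le_div_of_nonneg_right ?_ (by positivity)
      · linarith
    rw [hcast, intervalIntegral.integral_of_le hle]
    rw [← sq_abs]
    exact pow_le_pow_left₀ (abs_nonneg _) hb 2
  calc ∑ ℓ ∈ Finset.Icc 1 n,
        (f ((ℓ : ℝ) / n) - n * ∫ x in (((ℓ : ℝ) - 1) / n)..((ℓ : ℝ) / n), f x) ^ 2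
      ≤ ∑ _ℓ ∈ Finset.Icc 1 n, S ^ 2 := Finset.sum_le_sum hterm
    _ = n * S ^ 2 := by
        rw [Finset.sum_const, Nat.card_Icc]
        simp [nsmul_eq_mul]
end
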